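/- Let f(z) = Σ_{n≥0} a_n z^n with a_0 = 1 and let H_n(t) be the Chow polynomials of the Toeplitz matrix (a_{n-k}). Then Σ_{n≥0} H_n(t) z^n = (1-t)·f(z)/(f(tz) - t·f(z)) as formal power series in z. -/

import Mathlib

open Polynomial

/-- `d`, `H` are the Chow-derangement and Chow polynomials of the Toeplitz matrix
`(a_{n-k})`: `d 0 = 1`, `tⁿ dₙ(1/t) = dₙ`, `Hₙ = Σ_{k≤n} a_{n-k} d_k`, and
`tⁿ Hₙ(1/t) = t·Hₙ` for `n ≥ 1`. -/
def ToeplitzChow {A : Type*} [CommRing A] (a : ℕ → A) (d H : ℕ → A[X]) : Prop :=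
  d 0 = 1 ∧
  (∀ n, (d n).natDegree ≤ n) ∧
  (∀ n, reflect n (d n) = d n) ∧
  (∀ n, H n = ∑ k ∈ Finset.range (n + 1), C (a (n - k)) * d k) ∧
  (∀ n, 1 ≤ n → reflect n (H n) = X * H n)

/-- `Σ Hₙ(t) zⁿ = (1-t)·f(z)/(f(tz) - t f(z))`, stated multiplicatively in
`R[t][[z]]`. -/
theorem stmt15 {A : Type*} [CommRing A] [IsDomain A] (a : ℕ → A) (ha : a 0 = 1)
    (d H : ℕ → A[X]) (hdH : ToeplitzChow a d H) :
    (PowerSeries.mk fun n => H n) *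
        (PowerSeries.mk (fun n => C (a n) * X ^ n) -
          PowerSeries.C (R := A[X]) X * PowerSeries.mk fun n => C (a n)) =
      PowerSeries.C (R := A[X]) (1 - X) * PowerSeries.mk fun n => C (a n) := by
  obtain ⟨hd0, hdeg, hdref, hH, hHref⟩ := hdH
  -- reflect n (d k) = X^(n-k) * d k for k ≤ n
  have hrefl : ∀ n k : ℕ, k ≤ n → reflect n (d k) = X ^ (n - k) * d k := by
    intro n k hk
    have h1 : reflect (n - k + k) ((1 : A[X]) * d k) =
        reflect (n - k) 1 * reflect k (d k) :=
      reflect_mul 1 (d k) (by simp) (hdeg k)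
    rw [Nat.sub_add_cancel hk, one_mul] at h1
    rw [h1, reflect_one, hdref]
  have hsum : ∀ (n : ℕ) (s : Finset ℕ) (f : ℕ → A[X]),
      reflect n (∑ k ∈ s, f k) = ∑ k ∈ s, reflect n (f k) := by
    intro n s f
    induction s using Finset.induction with
    | empty => simp [reflect]
    | insert _ _ h ih => simp [Finset.sum_insert h, reflect_add, ih]
  -- reflect n (H n) as a sum
  have hreflH : ∀ n : ℕ, reflect n (H n) =
      ∑ k ∈ Finset.range (n + 1), C (a (n - k)) * X ^ (n - k) * d k := by
    intro n
    rw [hH n, hsum]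
    refine Finset.sum_congr rfl fun k hk => ?_
    rw [reflect_C_mul, hrefl n k (Nat.lt_succ_iff.mp (Finset.mem_range.mp hk)), mul_assoc]
  -- key identity: D(z) * (f(tz) - t f(z)) = 1 - t
  have key : (PowerSeries.mk fun n => d n) *
      (PowerSeries.mk (fun n => C (a n) * X ^ n) -
        PowerSeries.C (R := A[X]) X * PowerSeries.mk fun n => C (a n)) =
      PowerSeries.C (R := A[X]) (1 - X) := by
    ext n
    rw [PowerSeries.coeff_mul]
    have hc : ∀ j : ℕ, (PowerSeries.coeff (R := A[X]) j)
        (PowerSeries.mk (fun n => C (a n) * X ^ n) -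
          PowerSeries.C (R := A[X]) X * PowerSeries.mk fun n => C (a n)) =
        C (a j) * X ^ j - X * C (a j) := by
      intro j
      simp [PowerSeries.coeff_C_mul]
    simp only [PowerSeries.coeff_mk, hc]
    rw [Finset.Nat.sum_antidiagonal_eq_sum_range_succ
      (fun i j => d i * (C (a j) * X ^ j - X * C (a j)))]
    rcases Nat.eq_zero_or_pos n with rfl | hn
    · simp [hd0, ha, mul_sub, sub_mul, mul_comm]
    · rw [PowerSeries.coeff_C, if_neg hn.ne']
      have : ∑ k ∈ Finset.range (n + 1),
          d k * (C (a (n - k)) * X ^ (n - k) - X * C (a (n - k))) =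
          reflect n (H n) - X * H n := by
        rw [hreflH n, hH n, Finset.mul_sum, ← Finset.sum_sub_distrib]
        refine Finset.sum_congr rfl fun k _ => ?_
        ring
      rw [this, hHref n hn, sub_self]
  -- H series = f * D
  have hmkH : (PowerSeries.mk fun n => H n) =
      (PowerSeries.mk fun n => C (a n)) * (PowerSeries.mk fun n => d n) := by
    refine PowerSeries.ext fun n => ?_
    rw [PowerSeries.coeff_mul, Finset.Nat.sum_antidiagonal_eq_sum_range_succ_mk]
    simp only [PowerSeries.coeff_mk, hH n]
    calc ∑ k ∈ Finset.range (n + 1), C (a (n - k)) * d k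
        = ∑ k ∈ Finset.range (n + 1), C (a (n - k)) * d (n - (n - k)) :=
          Finset.sum_congr rfl fun k hk => by
            rw [Nat.sub_sub_self (Nat.lt_succ_iff.mp (Finset.mem_range.mp hk))]
      _ = ∑ k ∈ Finset.range (n + 1), C (a k) * d (n - k) := by
          simpa using Finset.sum_range_reflect (fun k => C (a k) * d (n - k)) (n + 1)
      _ = ∑ k ∈ Finset.range n.succ, C (a k) * d (n - k) := rfl
  rw [hmkH, mul_assoc, key, mul_comm]
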